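/- As x → 0, the difference √2/√(1 + x⁴/4) − √2·(1 − x⁴/8) is O(x⁸); that is, the reciprocal LayerNorm standard deviation 1/σ(E_quad(x)) equals √2·(1 − x⁴/8) up to eighth-order error, a strictly better approximation order than the O(x⁴) error obtained for the linear embedding E_lin. -/

import Mathlib

open Asymptotics Filter

/-- As `x → 0`, the difference `√2/√(1 + x⁴/4) − √2·(1 − x⁴/8)` is `O(x⁸)`:
the reciprocal LayerNorm standard deviation `1/σ(E_quad(x))` equals
`√2·(1 − x⁴/8)` up to eighth-order error, a strictly better approximation
order than the `O(x⁴)` error obtained for the linear embedding. -/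
theorem equad_inv_std_isBigO :
    (fun x : ℝ => Real.sqrt 2 / Real.sqrt (1 + x ^ 4 / 4) - Real.sqrt 2 * (1 - x ^ 4 / 8))
      =O[nhds (0 : ℝ)] (fun x : ℝ => x ^ 8) := by
  rw [Asymptotics.isBigO_iff]
  refine ⟨1, ?_⟩
  have hb : ∀ᶠ x : ℝ in nhds 0, |x| ≤ 1 := by
    have := Metric.closedBall_mem_nhds (0 : ℝ) (by norm_num : (0:ℝ) < 1)
    filter_upwards [this] with x hx
    simpa [Real.dist_eq] using hx
  filter_upwards [hb] with x hx
  have hx4 : x ^ 4 ≤ 1 := by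
    have h := pow_le_pow_left₀ (abs_nonneg x) hx 4
    rwa [one_pow, pow_abs, abs_of_nonneg (by positivity : (0:ℝ) ≤ x ^ 4)] at h
  have hx4' : 0 ≤ x ^ 4 := by positivity
  have hpos : (0:ℝ) < 1 + x ^ 4 / 4 := by nlinarith
  set s := Real.sqrt (1 + x ^ 4 / 4) with hs
  have hs2 : s ^ 2 = 1 + x ^ 4 / 4 := Real.sq_sqrt (le_of_lt hpos)
  have hs1 : 1 ≤ s := by
    have hsn : 0 ≤ s := Real.sqrt_nonneg _
    nlinarith [hs2]
  have hspos : 0 < s := lt_of_lt_of_le one_pos hs1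
  have hr2 : Real.sqrt 2 ≤ 1.5 := by
    rw [show (1.5:ℝ) = Real.sqrt (1.5 ^ 2) by
      rw [Real.sqrt_sq]; norm_num]
    exact Real.sqrt_le_sqrt (by norm_num)
  have hr2' : 0 ≤ Real.sqrt 2 := Real.sqrt_nonneg 2
  -- key: 1 - s*(1 - x^4/8) is between 0 and (3/64)*x^8
  have hkey1 : s * (1 - x ^ 4 / 8) ≤ 1 := by
    nlinarith [sq_nonneg (s * (1 - x ^ 4 / 8)), sq_nonneg (x ^ 4)]
  have hkey2 : 1 - (3/64) * x ^ 8 ≤ s * (1 - x ^ 4 / 8) := by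
    nlinarith [sq_nonneg (s * (1 - x ^ 4 / 8) - 1), sq_nonneg (x^4), sq_nonneg (x^8)]
  have hx8 : (0:ℝ) ≤ x ^ 8 := by positivity
  have h1 : Real.sqrt 2 / s - Real.sqrt 2 * (1 - x ^ 4 / 8) ≤ x ^ 8 := by
    rw [div_sub' (ne_of_gt hspos), div_le_iff₀ hspos]
    nlinarith
  have h2 : -(x ^ 8) ≤ Real.sqrt 2 / s - Real.sqrt 2 * (1 - x ^ 4 / 8) := by
    rw [div_sub' (ne_of_gt hspos), le_div_iff₀ hspos]
    nlinarith
  rw [Real.norm_eq_abs, Real.norm_eq_abs, abs_pow, one_mul]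
  calc |Real.sqrt 2 / s - Real.sqrt 2 * (1 - x ^ 4 / 8)| ≤ x ^ 8 := abs_le.mpr ⟨h2, h1⟩
    _ ≤ |x| ^ 8 := by rw [← abs_pow]; exact le_abs_self _
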